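/- For every relaxed σ-scenario 𝒮 = (T,S,μ,τ_T,τ_S,σ), the LDT graph 𝔏(𝒮) is a subgraph of the undirected Fitch graph 𝔉_sym(T,H_𝒮), where H_𝒮 ⊆ E(T) is the set of HGT-edges of 𝒮; i.e., whenever τ_T(lca_T(a,b)) < τ_S(lca_S(σ(a),σ(b))) for two distinct leaves a,b of T, the path in T between a and b contains an HGT-edge of 𝒮. -/
import Mathlib


/-- A planted phylogenetic rooted tree, encoded by a parent function on a
finite vertex set.  The root `0_T` is a fixed point of `parent`; every vertex
reaches the root by iterating `parent`; the root has exactly one child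
(`planted`); and every inner vertex (non-root vertex having a child) has at
least two children (`phylo`). -/
structure PPTree where
  V : Type
  [fintypeV : Fintype V]
  [decEqV : DecidableEq V]
  root : V
  parent : V → V
  parent_root : parent root = root
  reach : ∀ v : V, ∃ n : ℕ, parent^[n] v = root
  planted : ∃! v : V, v ≠ root ∧ parent v = root
  phylo : ∀ v : V, v ≠ root → (∃ u, parent u = v ∧ u ≠ v) →
      ∃ u w, parent u = v ∧ parent w = v ∧ u ≠ w ∧ u ≠ v ∧ w ≠ v

attribute [instance] PPTree.fintypeV PPTree.decEqV

namespace PPTree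

variable (T : PPTree)

/-- `T.le x y` means `x ⪯_T y`, i.e. `y` is an ancestor of `x` (or `x = y`). -/
def le (x y : T.V) : Prop := ∃ n : ℕ, T.parent^[n] x = y

/-- `T.lt x y` means `x ≺_T y`. -/
def lt (x y : T.V) : Prop := T.le x y ∧ x ≠ y

/-- Leaves are the `⪯_T`-minimal vertices, i.e. vertices without children. -/
def isLeaf (v : T.V) : Prop := ∀ u, T.parent u = v → u = v

/-- Inner vertices: neither leaves nor the planted root. -/
def inner (v : T.V) : Prop := v ≠ T.root ∧ ¬ T.isLeaf v

/-- The last common ancestor of two vertices: the `⪯_T`-minimal common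
ancestor. -/
noncomputable def lca (x y : T.V) : T.V :=
  @Classical.epsilon _ ⟨T.root⟩
    fun v => T.le x v ∧ T.le y v ∧ ∀ w, T.le x w → T.le y w → T.le v w

/-- The last common ancestor of a set of vertices. -/
noncomputable def lcaSet (A : Set T.V) : T.V :=
  @Classical.epsilon _ ⟨T.root⟩
    fun v => (∀ a ∈ A, T.le a v) ∧ ∀ w, (∀ a ∈ A, T.le a w) → T.le v w

/-- `ρ_T`, the unique child of the planted root. -/
noncomputable def rho : T.V := T.planted.choose

theorem rho_ne_root : T.rho ≠ T.root := T.planted.choose_spec.1.1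

/-- Edges of `T`, identified with their child endpoint: the vertex `v ≠ 0_T`
represents the edge `(parent v, v)`. -/
abbrev Edge := {v : T.V // v ≠ T.root}

/-- The union `V(T) ∪ E(T)`. -/
abbrev VE := T.V ⊕ T.Edge

/-- The ancestor order `⪯_T` extended to `V(T) ∪ E(T)`: for an edge `e = uv`
(`u` the parent of `v`), `x ⪯ e` iff `x ⪯ v`, `e ⪯ x` iff `u ⪯ x`, and
`e ⪯ f` iff the child endpoints are comparable accordingly. -/
def leVE : T.VE → T.VE → Prop
  | Sum.inl x, Sum.inl y => T.le x y
  | Sum.inl x, Sum.inr e => T.le x e.1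
  | Sum.inr e, Sum.inl y => T.le (T.parent e.1) y
  | Sum.inr e, Sum.inr f => T.le e.1 f.1

def ltVE (a b : T.VE) : Prop := T.leVE a b ∧ a ≠ b

/-- Two elements of `V(T) ∪ E(T)` are comparable. -/
def cmpVE (a b : T.VE) : Prop := T.leVE a b ∨ T.leVE b a

/-- Membership in `L(T)` for elements of `V(T) ∪ E(T)`. -/
def isLeafVE : T.VE → Prop
  | Sum.inl v => T.isLeaf v
  | Sum.inr _ => False

/-- Map an element of `V(T) ∪ E(T)` to a vertex (an edge `uv` is sent to its
child endpoint `v`). -/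
def toVertex : T.VE → T.V
  | Sum.inl v => v
  | Sum.inr e => e.1

end PPTree

/-- Axioms (R0)–(R3) of a reconciliation map `μ : V(T) → V(S) ∪ E(S)`. -/
structure IsRecon (T S : PPTree) (μ : T.V → S.VE) : Prop where
  R0 : ∀ x, μ x = Sum.inl S.root ↔ x = T.root
  R1 : ∀ x, S.isLeafVE (μ x) ↔ T.isLeaf x
  R2 : ∀ x y, T.lt y x → (∃ u, μ x = Sum.inl u) → (∃ v, μ y = Sum.inl v) → μ x ≠ μ y
  R3 : ∀ x y, T.lt y x → ¬ S.ltVE (μ x) (μ y)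

/-- A reconciliation is HGT-free if the images of the endpoints of every edge
of `T` are `⪯_S`-comparable. -/
def IsHGTFree (T S : PPTree) (μ : T.V → S.VE) : Prop :=
  ∀ v : T.V, v ≠ T.root → S.cmpVE (μ (T.parent v)) (μ v)

/-- `(T,S,μ,σ)` is a σ-reconciliation when `μ` restricted to `L(T)` equals
`σ`. -/
def SigmaCompat (T S : PPTree) (μ : T.V → S.VE) (σ : T.V → S.V) : Prop :=
  ∀ x, T.isLeaf x → μ x = Sum.inl (σ x)

/-- A time map for `T`. -/
def IsTimeMap (T : PPTree) (τ : T.V → ℝ) : Prop :=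
  ∀ x y, T.lt x y → τ x < τ y

/-- Axioms (S0)–(S3) of a relaxed scenario `(T,S,μ,τ_T,τ_S)`. -/
structure IsRelaxedScenario (T S : PPTree) (μ : T.V → S.VE)
    (τT : T.V → ℝ) (τS : S.V → ℝ) : Prop where
  timeT : IsTimeMap T τT
  timeS : IsTimeMap S τS
  S0 : ∀ x, μ x = Sum.inl S.root ↔ x = T.root
  S1 : ∀ x, S.isLeafVE (μ x) ↔ T.isLeaf x
  S2 : ∀ x v, μ x = Sum.inl v → τS v = τT x
  S3 : ∀ x (e : S.Edge), μ x = Sum.inr e → τS e.1 < τT x ∧ τT x < τS (S.parent e.1)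

namespace PPTree

variable {T : PPTree}

theorem le_refl' (x : T.V) : T.le x x := ⟨0, rfl⟩

theorem le_trans' {x y z : T.V} (h1 : T.le x y) (h2 : T.le y z) : T.le x z := by
  obtain ⟨n, rfl⟩ := h1
  obtain ⟨m, rfl⟩ := h2
  exact ⟨m + n, (Function.iterate_add_apply _ m n x).symm ▸ rfl⟩

theorem iterate_root (T : PPTree) (n : ℕ) : T.parent^[n] T.root = T.root :=
  Function.iterate_fixed T.parent_root n

theorem le_root' (x : T.V) : T.le x T.root := T.reach x

theorem le_parent_self (x : T.V) : T.le x (T.parent x) := ⟨1, rfl⟩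

theorem ne_root_of_lt' {x y : T.V} (h : T.le x y) (hne : x ≠ y) : x ≠ T.root := by
  rintro rfl
  obtain ⟨n, hn⟩ := h
  exact hne (hn ▸ (T.iterate_root n).symm)

theorem parent_ne_self {v : T.V} (hv : v ≠ T.root) : T.parent v ≠ v := by
  intro h
  obtain ⟨n, hn⟩ := T.reach v
  exact hv ((Function.iterate_fixed h n) ▸ hn)

theorem le_parent_of_ne {x y : T.V} (h : T.le x y) (hne : x ≠ y) :
    T.le (T.parent x) y := by
  obtain ⟨n, hn⟩ := h
  cases n with
  | zero => exact absurd hn hne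
  | succ m => exact ⟨m, by rw [← Function.iterate_succ_apply]; exact hn⟩

/-- Specification of the binary lca. -/
theorem lca_spec (T : PPTree) (a b : T.V) :
    T.le a (T.lca a b) ∧ T.le b (T.lca a b) ∧
      ∀ w, T.le a w → T.le b w → T.le (T.lca a b) w := by
  classical
  have hP : ∃ n, T.le b (T.parent^[n] a) := by
    obtain ⟨n, hn⟩ := T.reach a
    exact ⟨n, hn ▸ T.reach b⟩
  have hex : ∃ v, T.le a v ∧ T.le b v ∧ ∀ w, T.le a w → T.le b w → T.le v w := by
    refine ⟨T.parent^[Nat.find hP] a, ⟨Nat.find hP, rfl⟩, Nat.find_spec hP, ?_⟩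
    intro w hw1 hw2
    obtain ⟨m, hm⟩ := hw1
    have hle : Nat.find hP ≤ m := Nat.find_min' hP (hm ▸ hw2)
    refine ⟨m - Nat.find hP, ?_⟩
    rw [← Function.iterate_add_apply, Nat.sub_add_cancel hle]
    exact hm
  exact Classical.epsilon_spec hex

theorem leVE_refl (a : T.VE) : T.leVE a a := by
  cases a with
  | inl x => exact le_refl' x
  | inr e => exact le_refl' e.1

theorem leVE_trans {a b c : T.VE} (h1 : T.leVE a b) (h2 : T.leVE b c) :
    T.leVE a c := by
  cases a with
  | inl x =>
    cases b with
    | inl y =>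
      cases c with
      | inl z => exact le_trans' h1 h2
      | inr f => exact le_trans' h1 h2
    | inr e =>
      cases c with
      | inl z => exact le_trans' h1 (le_trans' (le_parent_self e.1) h2)
      | inr f => exact le_trans' h1 h2
  | inr e =>
    cases b with
    | inl y =>
      cases c with
      | inl z => exact le_trans' h1 h2
      | inr f =>
        exact le_trans' (le_parent_self e.1) (le_trans' h1 h2)
    | inr f =>
      cases c with
      | inl z =>
        by_cases hef : e.1 = f.1
        · show T.le (T.parent e.1) z
          rw [hef]; exact h2
        · exact le_trans' (le_parent_of_ne h1 hef)
            (le_trans' (le_parent_self f.1) h2)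
      | inr g => exact le_trans' h1 h2

end PPTree

theorem tau_le_of_le {T : PPTree} {τ : T.V → ℝ} (hτ : IsTimeMap T τ)
    {x y : T.V} (h : T.le x y) : τ x ≤ τ y := by
  by_cases hxy : x = y
  · exact le_of_eq (hxy ▸ rfl)
  · exact le_of_lt (hτ x y ⟨h, hxy⟩)

theorem time_lt_of_ltVE {T S : PPTree} {μ : T.V → S.VE} {τT : T.V → ℝ}
    {τS : S.V → ℝ} (hsc : IsRelaxedScenario T S μ τT τS) {x y : T.V}
    (h : S.ltVE (μ x) (μ y)) : τT x < τT y := by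
  obtain ⟨hle, hne⟩ := h
  rcases hx : μ x with u | e <;> rcases hy : μ y with v | f <;>
    rw [hx, hy] at hle hne
  · have h1 := hsc.S2 x u hx
    have h2 := hsc.S2 y v hy
    have huv : u ≠ v := fun h => hne (h ▸ rfl)
    have := hsc.timeS u v ⟨hle, huv⟩
    linarith
  · have h1 := hsc.S2 x u hx
    have h2 := (hsc.S3 y f hy).1
    have h3 : τS u ≤ τS f.1 := tau_le_of_le hsc.timeS hle
    linarith
  · have h1 := (hsc.S3 x e hx).2
    have h2 := hsc.S2 y v hy
    have h3 : τS (S.parent e.1) ≤ τS v := tau_le_of_le hsc.timeS hle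
    linarith
  · have hef : e.1 ≠ f.1 := fun h => hne (by
      have : e = f := Subtype.ext h
      rw [this])
    have h0 : S.le (S.parent e.1) f.1 := PPTree.le_parent_of_ne hle hef
    have h1 := (hsc.S3 x e hx).2
    have h2 := (hsc.S3 y f hy).1
    have h3 : τS (S.parent e.1) ≤ τS f.1 := tau_le_of_le hsc.timeS h0
    linarith

theorem nonHGT_down {T S : PPTree} {μ : T.V → S.VE} {τT : T.V → ℝ}
    {τS : S.V → ℝ} (hsc : IsRelaxedScenario T S μ τT τS) {v : T.V}
    (hv : v ≠ T.root) (h : S.cmpVE (μ (T.parent v)) (μ v)) :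
    S.leVE (μ v) (μ (T.parent v)) := by
  rcases h with h | h
  · by_cases heq : μ (T.parent v) = μ v
    · exact heq ▸ PPTree.leVE_refl _
    · exfalso
      have h1 : τT (T.parent v) < τT v := time_lt_of_ltVE hsc ⟨h, heq⟩
      have h2 : τT v < τT (T.parent v) :=
        hsc.timeT v (T.parent v) ⟨PPTree.le_parent_self v,
          (PPTree.parent_ne_self hv).symm⟩
      linarith
  · exact h

theorem climb {T S : PPTree} {μ : T.V → S.VE} {τT : T.V → ℝ} {τS : S.V → ℝ}
    (hsc : IsRelaxedScenario T S μ τT τS) {a c : T.V}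
    (H : ∀ w, w ≠ T.root → T.le a w → T.lt w c →
      S.cmpVE (μ (T.parent w)) (μ w)) :
    ∀ n (x : T.V), T.parent^[n] x = c → T.le a x → S.leVE (μ x) (μ c) := by
  intro n
  induction n with
  | zero => intro x hx _; rw [show x = c from hx]; exact PPTree.leVE_refl _
  | succ m ih =>
    intro x hx hax
    by_cases hxc : x = c
    · rw [hxc]; exact PPTree.leVE_refl _
    · have hlex : T.le x c := ⟨m + 1, hx⟩
      have hxroot : x ≠ T.root := PPTree.ne_root_of_lt' hlex hxc
      have hcmp := H x hxroot hax ⟨hlex, hxc⟩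
      have h1 := nonHGT_down hsc hxroot hcmp
      have h2 := ih (T.parent x)
        (by rw [← Function.iterate_succ_apply]; exact hx)
        (PPTree.le_trans' hax (PPTree.le_parent_self x))
      exact PPTree.leVE_trans h1 h2

/-- For every relaxed σ-scenario
`𝒮 = (T,S,μ,τ_T,τ_S,σ)`, the LDT graph `𝔏(𝒮)` is a subgraph of the
undirected Fitch graph `𝔉_sym(T,H_𝒮)`: whenever
`τ_T(lca_T(a,b)) < τ_S(lca_S(σ(a),σ(b)))` for distinct leaves `a,b` of `T`,
the path in `T` between `a` and `b` contains an HGT-edge of `𝒮` (edges are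
identified with their child endpoints `w`; the edges of the path between `a`
and `b` are those with `a ⪯ w` or `b ⪯ w`, and `w ≺ lca_T(a,b)`). -/
theorem ldt_subgraph_of_fitch
    (T S : PPTree) (μ : T.V → S.VE) (τT : T.V → ℝ) (τS : S.V → ℝ)
    (σ : T.V → S.V)
    (hsc : IsRelaxedScenario T S μ τT τS) (hσ : SigmaCompat T S μ σ)
    (a b : T.V) (ha : T.isLeaf a) (hb : T.isLeaf b) (hab : a ≠ b)
    (hLDT : τT (T.lca a b) < τS (S.lca (σ a) (σ b))) :
    ∃ w : T.V, w ≠ T.root ∧ (T.le a w ∨ T.le b w) ∧ T.lt w (T.lca a b) ∧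
      ¬ S.cmpVE (μ (T.parent w)) (μ w) := by
  by_contra hcon
  push_neg at hcon
  obtain ⟨hac, hbc, -⟩ := T.lca_spec a b
  obtain ⟨hsa, hsb, hmin⟩ := S.lca_spec (σ a) (σ b)
  obtain ⟨n, hn⟩ := hac
  obtain ⟨m, hm⟩ := hbc
  have Ha := climb hsc (fun w h1 h2 h3 => hcon w h1 (Or.inl h2) h3) n a hn
    (PPTree.le_refl' a)
  have Hb := climb hsc (fun w h1 h2 h3 => hcon w h1 (Or.inr h2) h3) m b hm
    (PPTree.le_refl' b)
  rw [hσ a ha] at Ha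
  rw [hσ b hb] at Hb
  rcases hc : μ (T.lca a b) with u | e <;> rw [hc] at Ha Hb
  · have h1 : S.le (S.lca (σ a) (σ b)) u := hmin u Ha Hb
    have h2 : τS (S.lca (σ a) (σ b)) ≤ τS u := tau_le_of_le hsc.timeS h1
    have h3 : τS u = τT (T.lca a b) := hsc.S2 _ u hc
    linarith
  · have h1 : S.le (S.lca (σ a) (σ b)) e.1 := hmin e.1 Ha Hb
    have h2 : τS (S.lca (σ a) (σ b)) ≤ τS e.1 := tau_le_of_le hsc.timeS h1
    have h3 := (hsc.S3 _ e hc).1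
    linarith
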